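/- Consider the closed-loop system described in the context. If the feasibility conditions φ_i < (ḡ_i + g̲_i)·v̄_i + μ_i·(q_i − p_i) hold for every i ∈ {1,…,n}, and the initial conditions satisfy |z_i(0)| < ψ_i(0) for every i ∈ {1,…,n}, then for all t ≥ 0 and all i ∈ {1,…,n} one has |z_i(t)| < ψ_i(t); in particular the output tracking error satisfies |z_1(t)| < ψ_1(t) for all t ≥ 0, the control input satisfies |υ_n(t)| < v̄_n for all t ≥ 0, and all closed-loop signals t ↦ ξ_i(t), z_i(t), θ_i(t), υ_i(t) are bounded on [0, ∞). -/

import Mathlib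

open Real Set

set_option maxHeartbeats 1600000

/-- The truncated state vector `ξ̄_i(t) = (ξ_1(t), …, ξ_i(t))` as an element of
`EuclideanSpace ℝ (Fin i)` (states are indexed `1, …, n`). -/
noncomputable def xibar (ξ : ℕ → ℝ → ℝ) (i : ℕ) (t : ℝ) : EuclideanSpace ℝ (Fin i) :=
  WithLp.toLp 2 (fun j => ξ (j.1 + 1) t)

/-- The vector `δ_i = (p_1 + v̄_0, …, p_i + v̄_{i−1})` in `EuclideanSpace ℝ (Fin i)`. -/
noncomputable def deltaVec (p vbar : ℕ → ℝ) (i : ℕ) : EuclideanSpace ℝ (Fin i) :=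
  WithLp.toLp 2 (fun j => p (j.1 + 1) + vbar j.1)


section Helpers

open Filter

private lemma ctrl_bound' (v c x : ℝ) (hv : 0 < v) :
    |(-(2 * v / π) * Real.arctan (π / (2 * c) * Real.tan (π / 2 * x)))| < v := by
  have hπ : (0:ℝ) < π := Real.pi_pos
  rw [abs_mul, abs_neg, abs_of_pos (by positivity : (0:ℝ) < 2 * v / π)]
  have h := Real.arctan_lt_pi_div_two (π / (2 * c) * Real.tan (π / 2 * x))
  have h2 := Real.neg_pi_div_two_lt_arctan (π / (2 * c) * Real.tan (π / 2 * x))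
  have habs : |Real.arctan (π / (2 * c) * Real.tan (π / 2 * x))| < π / 2 := abs_lt.2 ⟨h2, h⟩
  calc 2 * v / π * |Real.arctan (π / (2 * c) * Real.tan (π / 2 * x))|
      < 2 * v / π * (π / 2) := mul_lt_mul_of_pos_left habs (by positivity)
    _ = v := by field_simp

private lemma frac_bound' (a T : ℝ) (ha : 0 < a) :
    a * (1 + T ^ 2) / (1 + (a * T) ^ 2) ≤ max a (1/a) := by
  rw [div_le_iff₀ (by positivity)]
  have h1 : a ≤ max a (1/a) := le_max_left _ _
  have h2 : 1/a ≤ max a (1/a) := le_max_right _ _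
  have key : a * T ^ 2 = (1/a) * (a*T)^2 := by field_simp
  nlinarith [sq_nonneg (a*T), sq_nonneg T]

private lemma ctrl_hasDeriv' (v c : ℝ) (hv : 0 < v) (hc : 0 < c) {θf : ℝ → ℝ} {θ' s : ℝ}
    (hθ : HasDerivAt θf θ' s) (hθs : |θf s| < 1) :
    ∃ u', HasDerivAt (fun t => -(2 * v / π) * Real.arctan (π / (2 * c) * Real.tan (π / 2 * θf t))) u' s ∧
      |u'| ≤ max (π * v / (2 * c)) (2 * v * c / π) * |θ'| := by
  have hπ : (0:ℝ) < π := Real.pi_pos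
  set w := π / 2 * θf s with hw
  have hmem : w ∈ Ioo (-(π/2)) (π/2) := by
    obtain ⟨hl, hr⟩ := abs_lt.1 hθs
    constructor
    · nlinarith
    · nlinarith
  have hcos : Real.cos w ≠ 0 := (Real.cos_pos_of_mem_Ioo hmem).ne'
  have h1 : HasDerivAt (fun t => π / 2 * θf t) (π / 2 * θ') s := hθ.const_mul _
  have h2 : HasDerivAt (fun t => Real.tan (π / 2 * θf t)) (1 / Real.cos w ^ 2 * (π / 2 * θ')) s :=
    by have := (Real.hasDerivAt_tan hcos).comp s h1; exact this
  have h3 : HasDerivAt (fun t => π / (2 * c) * Real.tan (π / 2 * θf t))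
      (π / (2 * c) * (1 / Real.cos w ^ 2 * (π / 2 * θ'))) s := h2.const_mul _
  set T := Real.tan w with hT
  have h4 : HasDerivAt (fun t => Real.arctan (π / (2 * c) * Real.tan (π / 2 * θf t)))
      (1 / (1 + (π / (2 * c) * T) ^ 2) * (π / (2 * c) * (1 / Real.cos w ^ 2 * (π / 2 * θ')))) s :=
    (Real.hasDerivAt_arctan _).comp s h3
  have h5 := h4.const_mul (-(2 * v / π))
  refine ⟨_, h5, ?_⟩
  have hsec : 1 / Real.cos w ^ 2 = 1 + T ^ 2 := by
    rw [hT, ← Real.inv_one_add_tan_sq hcos]; simp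
  set a := π / (2 * c) with ha
  have hapos : 0 < a := by positivity
  have heq : -(2 * v / π) * (1 / (1 + (a * T) ^ 2) * (a * (1 / Real.cos w ^ 2 * (π / 2 * θ')))) =
      (-(v * (a * (1 + T ^ 2) / (1 + (a * T) ^ 2)))) * θ' := by
    rw [hsec]; field_simp
  rw [heq, abs_mul, abs_neg,
    abs_of_nonneg (by positivity : (0:ℝ) ≤ v * (a * (1 + T ^ 2) / (1 + (a * T) ^ 2)))]
  apply mul_le_mul_of_nonneg_right _ (abs_nonneg _)
  have hfb := frac_bound' a T hapos
  have hmax : v * (a * (1 + T ^ 2) / (1 + (a * T) ^ 2)) ≤ v * max a (1/a) :=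
    mul_le_mul_of_nonneg_left hfb hv.le
  refine hmax.trans (le_of_eq ?_)
  rw [mul_max_of_nonneg _ _ hv.le]
  congr 1
  · rw [ha]; ring
  · rw [ha]; field_simp

private lemma ctrl_odd' (v c x : ℝ) :
    -(2 * v / π) * Real.arctan (π / (2 * c) * Real.tan (π / 2 * (-x))) =
    -(-(2 * v / π) * Real.arctan (π / (2 * c) * Real.tan (π / 2 * x))) := by
  rw [show π / 2 * (-x) = -(π / 2 * x) by ring, Real.tan_neg, mul_neg, Real.arctan_neg]
  ring

private lemma ctrl_near_one' (v c η : ℝ) (hv : 0 < v) (hc : 0 < c) (hη : 0 < η) :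
    ∃ ρ : ℝ, 0 ≤ ρ ∧ ρ < 1 ∧ ∀ x, ρ < x → x < 1 →
      -(2 * v / π) * Real.arctan (π / (2 * c) * Real.tan (π / 2 * x)) < -v + η := by
  have hπ : (0:ℝ) < π := Real.pi_pos
  have hmap : Tendsto (fun x : ℝ => π / 2 * x) (nhdsWithin 1 (Iio 1)) (nhdsWithin (π/2) (Iio (π/2))) := by
    apply tendsto_nhdsWithin_of_tendsto_nhds_of_eventually_within
    · have h : Tendsto (fun x : ℝ => π / 2 * x) (nhds 1) (nhds (π/2 * 1)) :=
        (continuous_const.mul continuous_id).tendsto 1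
      simpa using h.mono_left nhdsWithin_le_nhds
    · filter_upwards [self_mem_nhdsWithin] with x hx
      have hx1 : x < 1 := hx
      exact (mul_lt_mul_of_pos_left hx1 (by positivity)).trans_eq (mul_one _)
  have htan : Tendsto (fun x : ℝ => Real.tan (π / 2 * x)) (nhdsWithin 1 (Iio 1)) atTop :=
    Real.tendsto_tan_pi_div_two.comp hmap
  have hmul : Tendsto (fun x : ℝ => π / (2*c) * Real.tan (π / 2 * x)) (nhdsWithin 1 (Iio 1)) atTop :=
    htan.const_mul_atTop (by positivity)
  have harc : Tendsto (fun x : ℝ => Real.arctan (π / (2*c) * Real.tan (π / 2 * x)))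
      (nhdsWithin 1 (Iio 1)) (nhds (π/2)) :=
    (Real.tendsto_arctan_atTop.mono_right nhdsWithin_le_nhds).comp hmul
  have hF : Tendsto (fun x : ℝ => -(2 * v / π) * Real.arctan (π / (2*c) * Real.tan (π / 2 * x)))
      (nhdsWithin 1 (Iio 1)) (nhds (-(2*v/π) * (π/2))) := harc.const_mul _
  have hval : -(2*v/π) * (π/2) = -v := by field_simp
  rw [hval] at hF
  have hev : ∀ᶠ x in nhdsWithin 1 (Iio 1),
      -(2 * v / π) * Real.arctan (π / (2*c) * Real.tan (π / 2 * x)) < -v + η :=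
    hF.eventually_lt_const (by linarith)
  rw [eventually_nhdsWithin_iff] at hev
  rcases Metric.eventually_nhds_iff.1 hev with ⟨ε, hε, hεs⟩
  refine ⟨max (1 - ε/2) 0, le_max_right _ _,
    by rw [max_lt_iff]; constructor <;> linarith, fun x hx hx1 => ?_⟩
  have h1 : 1 - ε/2 < x := lt_of_le_of_lt (le_max_left _ _) hx
  have hdist : dist x 1 < ε := by
    rw [Real.dist_eq, abs_lt]; constructor <;> linarith
  exact hεs hdist hx1

private lemma euclid_norm_mono' {i : ℕ} (x y : EuclideanSpace ℝ (Fin i)) (h : ∀ j, |x j| ≤ |y j|) :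
    ‖x‖ ≤ ‖y‖ := by
  rw [EuclideanSpace.norm_eq, EuclideanSpace.norm_eq]
  apply Real.sqrt_le_sqrt
  apply Finset.sum_le_sum
  intro j _
  rw [Real.norm_eq_abs, Real.norm_eq_abs]
  exact pow_le_pow_left₀ (abs_nonneg _) (h j) 2

end Helpers

/-- Theorem 1: For the closed-loop system (pure-feedback system of
order `n ≥ 1` with Lipschitz-bounded unknown drifts `f i`, bounded control
coefficients `g i`, bounded disturbances `d i`, performance functions `ψ i`, and
the recursively defined backstepping errors `z i`, normalized errors `θ i` and
arctan-tan controller inputs `υ i`, where `υ 0 = y_d`, together with the mutually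
recursive feasibility constants `φ i`, `r i` where `r 0 = r₀`): if the feasibility
conditions `φ_i < (ḡ_i + g̲_i)·v̄_i + μ_i·(q_i − p_i)` hold for every
`i ∈ {1,…,n}` and the initial conditions satisfy `|z_i(0)| < ψ_i(0)` for every
`i ∈ {1,…,n}`, then `|z_i(t)| < ψ_i(t)` for all `t ≥ 0` and `i ∈ {1,…,n}`; in
particular `|z_1(t)| < ψ_1(t)` for all `t ≥ 0`, the control input satisfies
`|υ_n(t)| < v̄_n` for all `t ≥ 0`, and all closed-loop signals `ξ_i, z_i, θ_i, υ_i`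
are bounded on `[0, ∞)`. -/

theorem approximation_free_control_main
    (n : ℕ) (hn : 1 ≤ n)
    (k glo ghi dbar p q μ vbar c : ℕ → ℝ)
    (f g : (i : ℕ) → EuclideanSpace ℝ (Fin i) → ℝ)
    (d : ℕ → ℝ → ℝ)
    (yd yd' : ℝ → ℝ) (r₀ : ℝ)
    (ξ ξ' υ z θ ψ : ℕ → ℝ → ℝ)
    (φ r : ℕ → ℝ)
    -- assumptions on the unknown system maps
    (hk : ∀ i ∈ Finset.Icc 1 n, 0 ≤ k i)
    (hf : ∀ i ∈ Finset.Icc 1 n, ∀ x : EuclideanSpace ℝ (Fin i), |f i x| ≤ k i * ‖x‖)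
    (hglo : ∀ i ∈ Finset.Icc 1 n, 0 ≤ glo i)
    (hgord : ∀ i ∈ Finset.Icc 1 n, glo i ≤ ghi i)
    (hg : ∀ i ∈ Finset.Icc 1 n, ∀ x : EuclideanSpace ℝ (Fin i),
      glo i ≤ g i x ∧ g i x ≤ ghi i)
    (hdbar : ∀ i ∈ Finset.Icc 1 n, 0 ≤ dbar i)
    (hd : ∀ i ∈ Finset.Icc 1 n, ∀ t : ℝ, 0 ≤ t → |d i t| ≤ dbar i)
    -- the desired output is continuously differentiable and bounded
    (hvbar0 : 0 < vbar 0) (hr₀ : 0 < r₀)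
    (hyd : ∀ t : ℝ, 0 ≤ t → HasDerivAt yd (yd' t) t)
    (hyd'cont : ContinuousOn yd' (Ici 0))
    (hydbd : ∀ t : ℝ, 0 ≤ t → |yd t| ≤ vbar 0)
    (hyd'bd : ∀ t : ℝ, 0 ≤ t → |yd' t| ≤ r₀)
    -- performance functions
    (hq : ∀ i ∈ Finset.Icc 1 n, 0 < q i)
    (hpq : ∀ i ∈ Finset.Icc 1 n, q i ≤ p i)
    (hμ : ∀ i ∈ Finset.Icc 1 n, 0 < μ i)
    (hψ : ∀ i ∈ Finset.Icc 1 n, ∀ t : ℝ, ψ i t = (p i - q i) * Real.exp (-(μ i) * t) + q i)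
    -- controller (recursive definition, `υ 0 = y_d`)
    (hvbar : ∀ i ∈ Finset.Icc 1 n, 0 < vbar i)
    (hc : ∀ i ∈ Finset.Icc 1 n, 0 < c i)
    (hυ0 : ∀ t : ℝ, υ 0 t = yd t)
    (hz : ∀ i ∈ Finset.Icc 1 n, ∀ t : ℝ, z i t = ξ i t - υ (i - 1) t)
    (hθ : ∀ i ∈ Finset.Icc 1 n, ∀ t : ℝ, θ i t = z i t / ψ i t)
    (hυ : ∀ i ∈ Finset.Icc 1 n, ∀ t : ℝ,
      υ i t = -(2 * vbar i / π) * Real.arctan (π / (2 * c i) * Real.tan (π / 2 * θ i t)))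
    -- state dynamics: `ξ` is continuously differentiable and satisfies the ODE
    (hξ : ∀ i ∈ Finset.Icc 1 n, ∀ t : ℝ, 0 ≤ t → HasDerivAt (ξ i) (ξ' i t) t)
    (hξ'cont : ∀ i ∈ Finset.Icc 1 n, ContinuousOn (ξ' i) (Ici 0))
    (hdyn : ∀ i ∈ Finset.Icc 1 (n - 1), ∀ t : ℝ, 0 ≤ t →
      ξ' i t = f i (xibar ξ i t) + g i (xibar ξ i t) * ξ (i + 1) t + d i t)
    (hdynn : ∀ t : ℝ, 0 ≤ t →
      ξ' n t = f n (xibar ξ n t) + g n (xibar ξ n t) * υ n t + d n t)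
    -- feasibility constants `φ i` and `r i` (with `r 0 = r₀`)
    (hr0 : r 0 = r₀)
    (hφ : ∀ i ∈ Finset.Icc 1 (n - 1),
      φ i = k i * ‖deltaVec p vbar i‖ + dbar i + ghi i * p (i + 1) + ghi i * vbar i + r (i - 1))
    (hφn : φ n = k n * ‖deltaVec p vbar n‖ + dbar n + ghi n * vbar n + r (n - 1))
    (hr : ∀ i ∈ Finset.Icc 1 n,
      r i = (φ i / q i + μ i * (p i - q i) / p i) *
        max (π * vbar i / (2 * c i)) (2 * vbar i * c i / π))
    -- feasibility conditions
    (hfeas : ∀ i ∈ Finset.Icc 1 n, φ i < (ghi i + glo i) * vbar i + μ i * (q i - p i))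
    -- initial conditions
    (hinit : ∀ i ∈ Finset.Icc 1 n, |z i 0| < ψ i 0) :
    (∀ t : ℝ, 0 ≤ t → ∀ i ∈ Finset.Icc 1 n, |z i t| < ψ i t) ∧
    (∀ t : ℝ, 0 ≤ t → |z 1 t| < ψ 1 t) ∧
    (∀ t : ℝ, 0 ≤ t → |υ n t| < vbar n) ∧
    (∀ i ∈ Finset.Icc 1 n, ∃ M : ℝ, ∀ t : ℝ, 0 ≤ t →
      |ξ i t| ≤ M ∧ |z i t| ≤ M ∧ |θ i t| ≤ M ∧ |υ i t| ≤ M) := by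
    classical
  have hπ : (0:ℝ) < π := Real.pi_pos
  have hnn : n ∈ Finset.Icc 1 n := Finset.mem_Icc.2 ⟨hn, le_refl n⟩
  -- basic facts about ψ
  have hppos : ∀ i ∈ Finset.Icc 1 n, 0 < p i := fun i hi => lt_of_lt_of_le (hq i hi) (hpq i hi)
  have hψpos : ∀ i ∈ Finset.Icc 1 n, ∀ t : ℝ, 0 < ψ i t := by
    intro i hi t
    rw [hψ i hi t]
    have h1 := hq i hi; have h2 := hpq i hi
    have h3 : 0 < Real.exp (-(μ i) * t) := Real.exp_pos _
    nlinarith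
  have hψgeq : ∀ i ∈ Finset.Icc 1 n, ∀ t : ℝ, q i ≤ ψ i t := by
    intro i hi t
    rw [hψ i hi t]
    have h2 := hpq i hi
    have h3 : 0 < Real.exp (-(μ i) * t) := Real.exp_pos _
    nlinarith
  have hexple : ∀ i ∈ Finset.Icc 1 n, ∀ t : ℝ, 0 ≤ t → Real.exp (-(μ i) * t) ≤ 1 := by
    intro i hi t ht
    rw [Real.exp_le_one_iff]
    have := hμ i hi
    nlinarith
  have hψlep : ∀ i ∈ Finset.Icc 1 n, ∀ t : ℝ, 0 ≤ t → ψ i t ≤ p i := by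
    intro i hi t ht
    rw [hψ i hi t]
    have h2 := hpq i hi
    have h3 := hexple i hi t ht
    have h4 : 0 < Real.exp (-(μ i) * t) := Real.exp_pos _
    nlinarith
  have hψcont : ∀ i ∈ Finset.Icc 1 n, Continuous (ψ i) := by
    intro i hi
    have hfun : ψ i = fun t => (p i - q i) * Real.exp (-(μ i) * t) + q i := funext (hψ i hi)
    rw [hfun]; fun_prop
  have hψderiv : ∀ i ∈ Finset.Icc 1 n, ∀ t : ℝ,
      HasDerivAt (ψ i) (-(μ i) * ((p i - q i) * Real.exp (-(μ i) * t))) t := by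
    intro i hi t
    have hfun : ψ i = fun t => (p i - q i) * Real.exp (-(μ i) * t) + q i := funext (hψ i hi)
    rw [hfun]
    have h1 : HasDerivAt (fun u : ℝ => -(μ i) * u) (-(μ i)) t := by
      simpa using (hasDerivAt_id t).const_mul (-(μ i))
    have h2 := (Real.hasDerivAt_exp _).comp t h1
    have h3 := (h2.const_mul (p i - q i)).add_const (q i)
    exact h3.congr_deriv (by ring)
  -- bound on the controllers
  have hυbd : ∀ j ∈ Finset.Icc 1 n, ∀ t : ℝ, |υ j t| < vbar j := by
    intro j hj t
    rw [hυ j hj t]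
    exact ctrl_bound' _ _ _ (hvbar j hj)
  have hθlt1 : ∀ j ∈ Finset.Icc 1 n, ∀ t : ℝ, |z j t| < ψ j t → |θ j t| < 1 := by
    intro j hj t hzt
    rw [hθ j hj t, abs_div, abs_of_pos (hψpos j hj t), div_lt_one (hψpos j hj t)]
    exact hzt
  -- bound on the states inside the funnel
  have hξbd : ∀ s : ℝ, 0 ≤ s → (∀ m ∈ Finset.Icc 1 n, |z m s| < ψ m s) →
      ∀ m ∈ Finset.Icc 1 n, |ξ m s| ≤ p m + vbar (m - 1) := by
    intro s hs hPs m hm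
    obtain ⟨hm1, hm2⟩ := Finset.mem_Icc.1 hm
    have h1 : ξ m s = z m s + υ (m - 1) s := by rw [hz m hm s]; ring
    have h2 : |z m s| ≤ p m := le_trans (hPs m hm).le (hψlep m hm s hs)
    have h3 : |υ (m - 1) s| ≤ vbar (m - 1) := by
      rcases eq_or_lt_of_le hm1 with h | h
      · rw [show m - 1 = 0 by omega]
        rw [hυ0 s]
        exact hydbd s hs
      · have hm1' : m - 1 ∈ Finset.Icc 1 n := Finset.mem_Icc.2 ⟨by omega, by omega⟩
        exact (hυbd _ hm1' s).le
    calc |ξ m s| = |z m s + υ (m - 1) s| := by rw [h1]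
      _ ≤ |z m s| + |υ (m - 1) s| := abs_add_le _ _
      _ ≤ p m + vbar (m - 1) := add_le_add h2 h3
  have hnormbd : ∀ j ∈ Finset.Icc 1 n, ∀ s : ℝ, 0 ≤ s →
      (∀ m ∈ Finset.Icc 1 n, |z m s| < ψ m s) →
      ‖xibar ξ j s‖ ≤ ‖deltaVec p vbar j‖ := by
    intro j hj s hs hPs
    apply euclid_norm_mono'
    intro jj
    show |ξ (jj.1 + 1) s| ≤ |p (jj.1 + 1) + vbar jj.1|
    have hmem : jj.1 + 1 ∈ Finset.Icc 1 n := by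
      refine Finset.mem_Icc.2 ⟨by omega, ?_⟩
      have := jj.2
      have := (Finset.mem_Icc.1 hj).2
      omega
    have hb := hξbd s hs hPs _ hmem
    rw [show jj.1 + 1 - 1 = jj.1 by omega] at hb
    exact hb.trans (le_abs_self _)
  have hghi0 : ∀ i ∈ Finset.Icc 1 n, 0 ≤ ghi i := fun i hi => le_trans (hglo i hi) (hgord i hi)
  -- the constant Bc
  set Bc : ℕ → ℝ := fun j => if j = n then
      k n * ‖deltaVec p vbar n‖ + dbar n + r (n - 1)
    else
      k j * ‖deltaVec p vbar j‖ + dbar j + ghi j * p (j + 1) + r (j - 1) with hBcdef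
  have hφB : ∀ j ∈ Finset.Icc 1 n, φ j = Bc j + ghi j * vbar j := by
    intro j hj
    obtain ⟨hj1, hj2⟩ := Finset.mem_Icc.1 hj
    rcases eq_or_ne j n with rfl | hne
    · rw [hφn, hBcdef]; simp only [↓reduceIte]; ring
    · have hj' : j ∈ Finset.Icc 1 (n - 1) := Finset.mem_Icc.2 ⟨hj1, by omega⟩
      rw [hφ j hj', hBcdef]; simp only [if_neg hne]; ring
  -- nonnegativity of the recursive constants
  have hrB : ∀ j : ℕ, j ≤ n → 0 ≤ r j ∧ (1 ≤ j → 0 ≤ Bc j) := by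
    intro j
    induction j with
    | zero =>
      intro _
      exact ⟨by rw [hr0]; exact hr₀.le, fun h => absurd h (by omega)⟩
    | succ m ih =>
      intro hmn
      have hrm : 0 ≤ r m := (ih (by omega)).1
      have hmem1 : m + 1 ∈ Finset.Icc 1 n := Finset.mem_Icc.2 ⟨by omega, hmn⟩
      have hB : 0 ≤ Bc (m + 1) := by
        rw [hBcdef]
        rcases eq_or_ne (m + 1) n with he | hne
        · simp only [he, ↓reduceIte]
          have h1 := hk n hnn
          have h2 := hdbar n hnn
          have h3 : r (n - 1) = r m := by rw [show n - 1 = m by omega]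
          have h4 : (0:ℝ) ≤ k n * ‖deltaVec p vbar n‖ := mul_nonneg h1 (norm_nonneg _)
          rw [h3]; linarith
        · simp only [if_neg hne]
          have h1 := hk (m+1) hmem1
          have h2 := hdbar (m+1) hmem1
          have h4 : (0:ℝ) ≤ k (m+1) * ‖deltaVec p vbar (m+1)‖ := mul_nonneg h1 (norm_nonneg _)
          have hmem2 : m + 2 ∈ Finset.Icc 1 n := Finset.mem_Icc.2 ⟨by omega, by omega⟩
          have h5 : (0:ℝ) ≤ ghi (m+1) * p (m+2) :=
            mul_nonneg (hghi0 _ hmem1) (hppos _ hmem2).le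
          have h3 : r (m + 1 - 1) = r m := by rw [show m + 1 - 1 = m by omega]
          rw [h3]
          have : ghi (m + 1) * p (m + 1 + 1) = ghi (m+1) * p (m+2) := by norm_num
          rw [this]
          linarith
      have hφ1 : 0 ≤ φ (m + 1) := by
        rw [hφB _ hmem1]
        have := mul_nonneg (hghi0 _ hmem1) (hvbar _ hmem1).le
        linarith
      have hr1 : 0 ≤ r (m + 1) := by
        rw [hr _ hmem1]
        apply mul_nonneg
        · apply add_nonneg
          · exact div_nonneg hφ1 (hq _ hmem1).le
          · exact div_nonneg (mul_nonneg (hμ _ hmem1).le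
              (sub_nonneg.2 (hpq _ hmem1))) (hppos _ hmem1).le
        · have hv1 := hvbar _ hmem1
          have hc1 := hc _ hmem1
          exact le_trans (by positivity : (0:ℝ) ≤ π * vbar (m+1) / (2 * c (m+1)))
            (le_max_left _ _)
      exact ⟨hr1, fun _ => hB⟩
  -- the key recursive differentiability/bound lemma
  have key : ∀ j : ℕ, j ≤ n →
      (∀ s : ℝ, 0 ≤ s → (∀ m ∈ Finset.Icc 1 n, |z m s| < ψ m s) →
        ∃ u', HasDerivAt (υ j) u' s ∧ |u'| ≤ r j) ∧
      (1 ≤ j → ∀ s : ℝ, 0 ≤ s → (∀ m ∈ Finset.Icc 1 n, |z m s| < ψ m s) →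
        ∃ zb, HasDerivAt (z j) (zb + g j (xibar ξ j s) * υ j s) s ∧ |zb| ≤ Bc j) := by
    intro j
    induction j with
    | zero =>
      intro _
      constructor
      · intro s hs _
        refine ⟨yd' s, ?_, ?_⟩
        · rw [funext hυ0]
          exact hyd s hs
        · rw [hr0]; exact hyd'bd s hs
      · intro h; exact absurd h (by omega)
    | succ m ih =>
      intro hmn
      have ihm := ih (by omega)
      have hmem1 : m + 1 ∈ Finset.Icc 1 n := Finset.mem_Icc.2 ⟨by omega, hmn⟩
      have hzpart : ∀ s : ℝ, 0 ≤ s → (∀ m' ∈ Finset.Icc 1 n, |z m' s| < ψ m' s) →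
          ∃ zb, HasDerivAt (z (m+1)) (zb + g (m+1) (xibar ξ (m+1) s) * υ (m+1) s) s ∧
            |zb| ≤ Bc (m+1) := by
        intro s hs hPs
        obtain ⟨u', hu', hu'bd⟩ := ihm.1 s hs hPs
        have hzfun : z (m+1) = fun t => ξ (m+1) t - υ m t := by
          funext t
          rw [hz (m+1) hmem1 t]
          norm_num
        have hξd := hξ (m+1) hmem1 s hs
        have hzd : HasDerivAt (z (m+1)) (ξ' (m+1) s - u') s := by
          rw [hzfun]; exact hξd.sub hu'
        have hgs := hg (m+1) hmem1 (xibar ξ (m+1) s)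
        have hnrm := hnormbd (m+1) hmem1 s hs hPs
        have hfs : |f (m+1) (xibar ξ (m+1) s)| ≤ k (m+1) * ‖deltaVec p vbar (m+1)‖ :=
          le_trans (hf _ hmem1 _) (mul_le_mul_of_nonneg_left hnrm (hk _ hmem1))
        have hds : |d (m+1) s| ≤ dbar (m+1) := hd _ hmem1 s hs
        rcases eq_or_ne (m + 1) n with he | hne
        · subst he
          refine ⟨f (m+1) (xibar ξ (m+1) s) + d (m+1) s - u', ?_, ?_⟩
          · convert hzd using 1
            rw [hdynn s hs]
            ring
          · rw [hBcdef]
            simp only [↓reduceIte]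
            rw [show m + 1 - 1 = m by omega]
            calc |f (m+1) (xibar ξ (m+1) s) + d (m+1) s - u'|
                ≤ |f (m+1) (xibar ξ (m+1) s) + d (m+1) s| + |u'| := abs_sub _ _
              _ ≤ |f (m+1) (xibar ξ (m+1) s)| + |d (m+1) s| + |u'| := by
                  have := abs_add_le (f (m+1) (xibar ξ (m+1) s)) (d (m+1) s)
                  linarith
              _ ≤ k (m+1) * ‖deltaVec p vbar (m+1)‖ + dbar (m+1) + r m := by
                  linarith
        · have hlt : m + 1 ∈ Finset.Icc 1 (n - 1) := Finset.mem_Icc.2 ⟨by omega, by omega⟩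
          have hdyneq := hdyn (m+1) hlt s hs
          have hmem2 : m + 2 ∈ Finset.Icc 1 n := Finset.mem_Icc.2 ⟨by omega, by omega⟩
          have hξ2 : ξ (m+2) s = z (m+2) s + υ (m+1) s := by
            have := hz (m+2) hmem2 s
            rw [show m + 2 - 1 = m + 1 by omega] at this
            linarith
          refine ⟨f (m+1) (xibar ξ (m+1) s) + d (m+1) s - u' +
            g (m+1) (xibar ξ (m+1) s) * z (m+2) s, ?_, ?_⟩
          · convert hzd using 1
            rw [hdyneq, show m + 1 + 1 = m + 2 by omega, hξ2]
            ring
          · rw [hBcdef]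
            simp only [if_neg hne]
            rw [show m + 1 - 1 = m by omega, show m + 1 + 1 = m + 2 by omega]
            have hz2 : |z (m+2) s| ≤ p (m+2) := (hPs _ hmem2).le.trans (hψlep _ hmem2 s hs)
            have hgabs : |g (m+1) (xibar ξ (m+1) s)| ≤ ghi (m+1) := by
              rw [abs_le]
              constructor
              · have := hglo _ hmem1
                have := hghi0 _ hmem1
                linarith [hgs.1]
              · exact hgs.2
            have hgz : |g (m+1) (xibar ξ (m+1) s) * z (m+2) s| ≤ ghi (m+1) * p (m+2) := by
              rw [abs_mul]
              exact mul_le_mul hgabs hz2 (abs_nonneg _) (hghi0 _ hmem1)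
            calc |f (m+1) (xibar ξ (m+1) s) + d (m+1) s - u' +
                  g (m+1) (xibar ξ (m+1) s) * z (m+2) s|
                ≤ |f (m+1) (xibar ξ (m+1) s) + d (m+1) s - u'| +
                  |g (m+1) (xibar ξ (m+1) s) * z (m+2) s| := abs_add_le _ _
              _ ≤ |f (m+1) (xibar ξ (m+1) s)| + |d (m+1) s| + |u'| +
                  |g (m+1) (xibar ξ (m+1) s) * z (m+2) s| := by
                  have h1 := abs_sub (f (m+1) (xibar ξ (m+1) s) + d (m+1) s) u'
                  have h2 := abs_add_le (f (m+1) (xibar ξ (m+1) s)) (d (m+1) s)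
                  linarith
              _ ≤ k (m+1) * ‖deltaVec p vbar (m+1)‖ + dbar (m+1) + ghi (m+1) * p (m+2) + r m := by
                  linarith
      refine ⟨?_, fun _ => hzpart⟩
      intro s hs hPs
      obtain ⟨zb, hzd, hzbbd⟩ := hzpart s hs hPs
      have hgs := hg (m+1) hmem1 (xibar ξ (m+1) s)
      have hz'bd : |zb + g (m+1) (xibar ξ (m+1) s) * υ (m+1) s| ≤ φ (m+1) := by
        rw [hφB _ hmem1]
        have hgabs : |g (m+1) (xibar ξ (m+1) s)| ≤ ghi (m+1) := by
          rw [abs_le]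
          constructor
          · have := hglo _ hmem1
            have := hghi0 _ hmem1
            linarith [hgs.1]
          · exact hgs.2
        have hgu : |g (m+1) (xibar ξ (m+1) s) * υ (m+1) s| ≤ ghi (m+1) * vbar (m+1) := by
          rw [abs_mul]
          exact mul_le_mul hgabs (hυbd _ hmem1 s).le (abs_nonneg _) (hghi0 _ hmem1)
        calc |zb + g (m+1) (xibar ξ (m+1) s) * υ (m+1) s|
            ≤ |zb| + |g (m+1) (xibar ξ (m+1) s) * υ (m+1) s| := abs_add_le _ _
          _ ≤ Bc (m+1) + ghi (m+1) * vbar (m+1) := add_le_add hzbbd hgu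
      set z' := zb + g (m+1) (xibar ξ (m+1) s) * υ (m+1) s with hz'def
      have hψd := hψderiv (m+1) hmem1 s
      have hψs := hψpos (m+1) hmem1 s
      have hθfun : θ (m+1) = fun t => z (m+1) t / ψ (m+1) t := funext (hθ (m+1) hmem1)
      have hθd : HasDerivAt (θ (m+1))
          ((z' * ψ (m+1) s - z (m+1) s * (-(μ (m+1)) * ((p (m+1) - q (m+1)) *
            Real.exp (-(μ (m+1)) * s)))) / ψ (m+1) s ^ 2) s := by
        rw [hθfun]
        exact hzd.div hψd hψs.ne'
      -- bound the θ-derivative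
      have hφ0 : 0 ≤ φ (m+1) := (abs_nonneg _).trans hz'bd
      have hE0 : 0 < Real.exp (-(μ (m+1)) * s) := Real.exp_pos _
      have hE1 : Real.exp (-(μ (m+1)) * s) ≤ 1 := hexple _ hmem1 s hs
      have hq1 := hq _ hmem1
      have hp1 := hppos _ hmem1
      have hμ1 := hμ _ hmem1
      have hpq1 := hpq _ hmem1
      have hΨq := hψgeq _ hmem1 s
      have hZ : |z (m+1) s| ≤ ψ (m+1) s := (hPs _ hmem1).le
      have hΨform : ψ (m+1) s = (p (m+1) - q (m+1)) * Real.exp (-(μ (m+1)) * s) + q (m+1) :=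
        hψ _ hmem1 s
      set E := Real.exp (-(μ (m+1)) * s) with hEdef
      set W := μ (m+1) * ((p (m+1) - q (m+1)) * E) with hWdef
      have hW0 : 0 ≤ W := by
        rw [hWdef]
        exact mul_nonneg hμ1.le (mul_nonneg (by linarith) hE0.le)
      have hnum : |z' * ψ (m+1) s - z (m+1) s * (-(μ (m+1)) * ((p (m+1) - q (m+1)) * E))|
          ≤ φ (m+1) * ψ (m+1) s + ψ (m+1) s * W := by
        have e1 : z' * ψ (m+1) s - z (m+1) s * (-(μ (m+1)) * ((p (m+1) - q (m+1)) * E)) =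
            z' * ψ (m+1) s + z (m+1) s * W := by rw [hWdef]; ring
        rw [e1]
        calc |z' * ψ (m+1) s + z (m+1) s * W|
            ≤ |z' * ψ (m+1) s| + |z (m+1) s * W| := abs_add_le _ _
          _ = |z'| * ψ (m+1) s + |z (m+1) s| * W := by
              rw [abs_mul, abs_mul, abs_of_pos hψs, abs_of_nonneg hW0]
          _ ≤ φ (m+1) * ψ (m+1) s + ψ (m+1) s * W := by
              have := mul_le_mul_of_nonneg_right hz'bd hψs.le
              have := mul_le_mul_of_nonneg_right hZ hW0
              linarith
      have hθ'bd : |(z' * ψ (m+1) s - z (m+1) s * (-(μ (m+1)) * ((p (m+1) - q (m+1)) * E))) /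
          ψ (m+1) s ^ 2| ≤ φ (m+1) / q (m+1) + μ (m+1) * (p (m+1) - q (m+1)) / p (m+1) := by
        rw [abs_div, abs_of_pos (by positivity : (0:ℝ) < ψ (m+1) s ^ 2)]
        have h2 : (φ (m+1) * ψ (m+1) s + ψ (m+1) s * W) / ψ (m+1) s ^ 2 =
            φ (m+1) / ψ (m+1) s + W / ψ (m+1) s := by
          field_simp
        have h3 : φ (m+1) / ψ (m+1) s ≤ φ (m+1) / q (m+1) := by
          rw [div_le_div_iff₀ hψs hq1]
          nlinarith
        have h4 : W / ψ (m+1) s ≤ μ (m+1) * (p (m+1) - q (m+1)) / p (m+1) := by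
          rw [div_le_div_iff₀ hψs hp1, hWdef, hΨform]
          nlinarith [mul_nonneg (mul_nonneg (mul_nonneg hμ1.le
            (by linarith : (0:ℝ) ≤ p (m+1) - q (m+1))) hq1.le)
            (by linarith : (0:ℝ) ≤ 1 - E)]
        calc |z' * ψ (m+1) s - z (m+1) s * (-(μ (m+1)) * ((p (m+1) - q (m+1)) * E))| /
              ψ (m+1) s ^ 2
            ≤ (φ (m+1) * ψ (m+1) s + ψ (m+1) s * W) / ψ (m+1) s ^ 2 := by gcongr
          _ = φ (m+1) / ψ (m+1) s + W / ψ (m+1) s := h2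
          _ ≤ φ (m+1) / q (m+1) + μ (m+1) * (p (m+1) - q (m+1)) / p (m+1) := add_le_add h3 h4
      have hθs1 : |θ (m+1) s| < 1 := hθlt1 _ hmem1 s (hPs _ hmem1)
      obtain ⟨u', hu'd, hu'bd⟩ :=
        ctrl_hasDeriv' (vbar (m+1)) (c (m+1)) (hvbar _ hmem1) (hc _ hmem1) hθd hθs1
      refine ⟨u', ?_, ?_⟩
      · have hυfun : υ (m+1) = fun t => -(2 * vbar (m+1) / π) *
            Real.arctan (π / (2 * c (m+1)) * Real.tan (π / 2 * θ (m+1) t)) :=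
          funext (hυ (m+1) hmem1)
        rw [hυfun]
        exact hu'd
      · rw [hr _ hmem1]
        have hmax0 : 0 ≤ max (π * vbar (m+1) / (2 * c (m+1))) (2 * vbar (m+1) * c (m+1) / π) := by
          refine le_trans ?_ (le_max_left _ _)
          have := hvbar _ hmem1
          have := hc _ hmem1
          positivity
        refine le_trans hu'bd ?_
        refine le_trans (mul_le_mul_of_nonneg_left hθ'bd hmax0) (le_of_eq ?_)
        ring
  -- the barrier lemma
  have barrier : ∀ i ∈ Finset.Icc 1 n, ∃ ρ : ℝ, 0 ≤ ρ ∧ ρ < 1 ∧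
      (∀ s : ℝ, 0 ≤ s → (∀ m ∈ Finset.Icc 1 n, |z m s| < ψ m s) → ρ < θ i s →
        ∃ D, HasDerivAt (fun t => z i t - ψ i t) D s ∧ D < 0) ∧
      (∀ s : ℝ, 0 ≤ s → (∀ m ∈ Finset.Icc 1 n, |z m s| < ψ m s) → θ i s < -ρ →
        ∃ D, HasDerivAt (fun t => z i t + ψ i t) D s ∧ 0 < D) := by
    intro i hi
    obtain ⟨hi1, hi2⟩ := Finset.mem_Icc.1 hi
    have hBφ := hφB i hi
    have hB0 : 0 ≤ Bc i := (hrB i hi2).2 hi1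
    have hμpq : 0 ≤ μ i * (p i - q i) :=
      mul_nonneg (hμ i hi).le (sub_nonneg.2 (hpq i hi))
    have hslack : 0 < glo i * vbar i - Bc i - μ i * (p i - q i) := by
      have hfe := hfeas i hi
      rw [hBφ] at hfe
      nlinarith
    have hglo0 := hglo i hi
    set η := (glo i * vbar i - Bc i - μ i * (p i - q i)) / (glo i + 1) with hηdef
    have hη : 0 < η := div_pos hslack (by linarith)
    have hgη : glo i * η < glo i * vbar i - Bc i - μ i * (p i - q i) := by
      rw [hηdef]
      rw [show glo i * ((glo i * vbar i - Bc i - μ i * (p i - q i)) / (glo i + 1)) =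
        (glo i * vbar i - Bc i - μ i * (p i - q i)) * (glo i / (glo i + 1)) by ring]
      calc (glo i * vbar i - Bc i - μ i * (p i - q i)) * (glo i / (glo i + 1))
          < (glo i * vbar i - Bc i - μ i * (p i - q i)) * 1 := by
            apply mul_lt_mul_of_pos_left _ hslack
            rw [div_lt_one (by linarith)]
            linarith
        _ = glo i * vbar i - Bc i - μ i * (p i - q i) := mul_one _
    have hηvbar : η ≤ vbar i := by
      rw [hηdef, div_le_iff₀ (by linarith)]
      nlinarith [mul_nonneg hglo0 (hvbar i hi).le, (hvbar i hi).le]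
    obtain ⟨ρ, hρ0, hρ1, hρ⟩ := ctrl_near_one' (vbar i) (c i) η (hvbar i hi) (hc i hi) hη
    refine ⟨ρ, hρ0, hρ1, ?_, ?_⟩
    · intro s hs hPs hθρ
      obtain ⟨zb, hzd, hzbd⟩ := (key i hi2).2 hi1 s hs hPs
      have hθabs := hθlt1 i hi s (hPs i hi)
      have hθlt : θ i s < 1 := (abs_lt.1 hθabs).2
      have hυval : υ i s < -vbar i + η := by
        rw [hυ i hi s]
        exact hρ (θ i s) hθρ hθlt
      have hυle0 : υ i s ≤ 0 := by linarith
      have hgs := hg i hi (xibar ξ i s)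
      have hgu : g i (xibar ξ i s) * υ i s ≤ glo i * υ i s :=
        mul_le_mul_of_nonpos_right hgs.1 hυle0
      have hgu2 : glo i * υ i s ≤ glo i * (-vbar i + η) :=
        mul_le_mul_of_nonneg_left hυval.le hglo0
      have hψd := hψderiv i hi s
      have hE0 : 0 < Real.exp (-(μ i) * s) := Real.exp_pos _
      have hE1 : Real.exp (-(μ i) * s) ≤ 1 := hexple i hi s hs
      refine ⟨_, hzd.sub hψd, ?_⟩
      have habs := abs_le.1 hzbd
      have hψ'ge : -(μ i * (p i - q i)) ≤ -(μ i) * ((p i - q i) * Real.exp (-(μ i) * s)) := by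
        nlinarith
      nlinarith [habs.2]
    · intro s hs hPs hθρ
      obtain ⟨zb, hzd, hzbd⟩ := (key i hi2).2 hi1 s hs hPs
      have hθabs := hθlt1 i hi s (hPs i hi)
      have hθgt : -1 < θ i s := (abs_lt.1 hθabs).1
      have hυval : vbar i - η < υ i s := by
        have hneg : -(2 * vbar i / π) * Real.arctan (π / (2 * c i) *
            Real.tan (π / 2 * (-(θ i s)))) < -vbar i + η :=
          hρ (-(θ i s)) (by linarith) (by linarith)
        rw [ctrl_odd'] at hneg
        rw [hυ i hi s]
        linarith
      have hυge0 : 0 ≤ υ i s := by linarith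
      have hgs := hg i hi (xibar ξ i s)
      have hgu : glo i * υ i s ≤ g i (xibar ξ i s) * υ i s :=
        mul_le_mul_of_nonneg_right hgs.1 hυge0
      have hgu2 : glo i * (vbar i - η) ≤ glo i * υ i s :=
        mul_le_mul_of_nonneg_left hυval.le hglo0
      have hψd := hψderiv i hi s
      have hE0 : 0 < Real.exp (-(μ i) * s) := Real.exp_pos _
      have hE1 : Real.exp (-(μ i) * s) ≤ 1 := hexple i hi s hs
      refine ⟨_, hzd.add hψd, ?_⟩
      have habs := abs_le.1 hzbd
      have hψ'le : -(μ i) * ((p i - q i) * Real.exp (-(μ i) * s)) ≥ -(μ i * (p i - q i)) := by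
        nlinarith
      nlinarith [habs.1]
  -- the invariance result
  have inv : ∀ t : ℝ, 0 ≤ t → ∀ m ∈ Finset.Icc 1 n, |z m t| < ψ m t := by
    by_contra hcon
    push_neg at hcon
    obtain ⟨t0, ht0, i0, hi0, hzi0⟩ := hcon
    set S : Set ℝ := {t | 0 ≤ t ∧ ∃ m ∈ Finset.Icc 1 n, ψ m t ≤ |z m t|} with hSdef
    have hSne : S.Nonempty := ⟨t0, ht0, i0, hi0, hzi0⟩
    have hbdd : BddBelow S := ⟨0, fun x hx => hx.1⟩
    set τ := sInf S with hτdef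
    have hτ0 : 0 ≤ τ := le_csInf hSne (fun x hx => hx.1)
    have hPlt : ∀ s : ℝ, 0 ≤ s → s < τ → ∀ m ∈ Finset.Icc 1 n, |z m s| < ψ m s := by
      intro s hs hsτ m hm
      by_contra hcc
      push_neg at hcc
      have hsS : s ∈ S := ⟨hs, m, hm, hcc⟩
      exact absurd (csInf_le hbdd hsS) (not_le.2 hsτ)
    -- continuity of the controllers where the tracking errors are strictly inside the funnel
    have hυcont : ∀ j ∈ Finset.Icc 1 n, ∀ t : ℝ, ContinuousAt (z j) t → |z j t| < ψ j t →
        ContinuousAt (υ j) t := by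
      intro j hj t hzc hlt
      have hθc : ContinuousAt (θ j) t := by
        have hfun : θ j = fun u => z j u / ψ j u := funext (hθ j hj)
        rw [hfun]
        exact hzc.div ((hψcont j hj).continuousAt) (hψpos j hj t).ne'
      have hθval : |θ j t| < 1 := hθlt1 j hj t hlt
      have hfun : υ j = fun u => -(2 * vbar j / π) *
          Real.arctan (π / (2 * c j) * Real.tan (π / 2 * θ j u)) := funext (hυ j hj)
      rw [hfun]
      have hcosne : Real.cos (π / 2 * θ j t) ≠ 0 := by
        refine (Real.cos_pos_of_mem_Ioo ?_).ne'
        obtain ⟨hl, hr'⟩ := abs_lt.1 hθval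
        constructor
        · show -(π/2) < π / 2 * θ j t
          nlinarith
        · show π / 2 * θ j t < π/2
          nlinarith
      have h1 : ContinuousAt (fun u => π / 2 * θ j u) t := continuousAt_const.mul hθc
      have h2 : ContinuousAt (fun u => Real.tan (π / 2 * θ j u)) t :=
        ContinuousAt.comp (x := t) (f := fun u => π / 2 * θ j u) (g := Real.tan)
          (Real.continuousAt_tan.2 hcosne) h1
      have h3 : ContinuousAt (fun u => π / (2 * c j) * Real.tan (π / 2 * θ j u)) t :=
        continuousAt_const.mul h2
      have h4 : ContinuousAt (fun u => Real.arctan (π / (2 * c j) * Real.tan (π / 2 * θ j u))) t :=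
        ContinuousAt.comp (x := t) (f := fun u => π / (2 * c j) * Real.tan (π / 2 * θ j u))
          (g := Real.arctan) Real.continuousAt_arctan h3
      exact continuousAt_const.mul h4
    have hzcont : ∀ j ∈ Finset.Icc 1 n,
        (∀ l ∈ Finset.Icc 1 n, l < j → ContinuousAt (z l) τ ∧ |z l τ| < ψ l τ) →
        ContinuousAt (z j) τ := by
      intro j hj hprev
      obtain ⟨hj1, hj2⟩ := Finset.mem_Icc.1 hj
      have hfun : z j = fun t => ξ j t - υ (j - 1) t := funext (fun t => hz j hj t)
      rw [hfun]
      have hξc : ContinuousAt (ξ j) τ := (hξ j hj τ hτ0).continuousAt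
      refine hξc.sub ?_
      rcases eq_or_lt_of_le hj1 with h | h
      · rw [show j - 1 = 0 by omega]
        have : υ 0 = yd := funext hυ0
        rw [this]
        exact (hyd τ hτ0).continuousAt
      · have hl : j - 1 ∈ Finset.Icc 1 n := Finset.mem_Icc.2 ⟨by omega, by omega⟩
        obtain ⟨hc1, hc2⟩ := hprev (j-1) hl (by omega)
        exact hυcont (j-1) hl τ hc1 hc2
    by_cases hall : ∀ m ∈ Finset.Icc 1 n, |z m τ| < ψ m τ
    · -- all constraints strict at τ: contradiction with the infimum property
      have hallc : ∀ j ∈ Finset.Icc 1 n, ContinuousAt (z j) τ := by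
        intro j
        induction j using Nat.strong_induction_on with
        | _ j ih =>
          intro hj
          exact hzcont j hj (fun l hl hlj => ⟨ih l hlj hl, hall l hl⟩)
      have hev : ∀ᶠ s in nhds τ, ∀ m ∈ Finset.Icc 1 n, |z m s| < ψ m s := by
        rw [Filter.eventually_all_finset]
        intro m hm
        have h1 : ContinuousAt (fun s => ψ m s - |z m s|) τ :=
          ((hψcont m hm).continuousAt).sub (hallc m hm).abs
        have h2 : (0:ℝ) < ψ m τ - |z m τ| := by linarith [hall m hm]
        have h3 := h1.tendsto.eventually_const_lt h2
        filter_upwards [h3] with x hx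
        linarith
      rcases Metric.eventually_nhds_iff.1 hev with ⟨ε, hε, hball⟩
      have hexs : ∃ s ∈ S, s < τ + ε := by
        by_contra hno
        push_neg at hno
        have : τ + ε ≤ τ := le_csInf hSne hno
        linarith
      obtain ⟨s, hsS, hsfar⟩ := hexs
      have hτs : τ ≤ s := csInf_le hbdd hsS
      have hds : dist s τ < ε := by
        rw [Real.dist_eq, abs_lt]
        constructor <;> linarith
      obtain ⟨hs0, m, hm, hmge⟩ := hsS
      exact absurd (hball hds m hm) (not_lt.2 hmge)
    · -- a first constraint is hit at τ
      push_neg at hall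
      have hτpos : 0 < τ := by
        rcases eq_or_lt_of_le hτ0 with he | h
        · exfalso
          obtain ⟨m, hm, hmge⟩ := hall
          rw [← he] at hmge
          exact absurd (hinit m hm) (not_lt.2 hmge)
        · exact h
      -- minimal hitting index
      have hex : ∃ m, m ∈ Finset.Icc 1 n ∧ ψ m τ ≤ |z m τ| := by
        obtain ⟨m, hm, hge⟩ := hall
        exact ⟨m, hm, hge⟩
      set m := Nat.find hex with hmdef
      obtain ⟨hm, hmge⟩ : m ∈ Finset.Icc 1 n ∧ ψ m τ ≤ |z m τ| := Nat.find_spec hex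
      have hmmin : ∀ l ∈ Finset.Icc 1 n, l < m → |z l τ| < ψ l τ := by
        intro l hl hlm
        have hnm := Nat.find_min hex hlm
        have h2 := (not_and.mp hnm) hl
        linarith [not_le.1 h2]
      have hcontlt : ∀ l, l ∈ Finset.Icc 1 n → l < m → ContinuousAt (z l) τ := by
        intro l
        induction l using Nat.strong_induction_on with
        | _ l ih =>
          intro hl hlm
          exact hzcont l hl (fun l' hl' hl'l =>
            ⟨ih l' hl'l hl' (lt_trans hl'l hlm), hmmin l' hl' (lt_trans hl'l hlm)⟩)
      have hzcτ : ContinuousAt (z m) τ :=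
        hzcont m hm (fun l hl hlm => ⟨hcontlt l hl hlm, hmmin l hl hlm⟩)
      have hle : |z m τ| ≤ ψ m τ := by
        have hcl : τ ∈ closure (Ico 0 τ) := by
          rw [closure_Ico (ne_of_lt hτpos)]
          exact ⟨hτ0, le_refl τ⟩
        haveI hnb : (nhdsWithin τ (Ico 0 τ)).NeBot := mem_closure_iff_nhdsWithin_neBot.1 hcl
        have htd : Filter.Tendsto (fun s => ψ m s - |z m s|) (nhdsWithin τ (Ico 0 τ))
            (nhds (ψ m τ - |z m τ|)) :=
          (((hψcont m hm).continuousAt).sub hzcτ.abs).continuousWithinAt.tendsto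
        have h0 : (0:ℝ) ≤ ψ m τ - |z m τ| := by
          refine ge_of_tendsto htd ?_
          filter_upwards [self_mem_nhdsWithin] with x hx
          have := hPlt x hx.1 hx.2 m hm
          linarith
        linarith
      have heqz : |z m τ| = ψ m τ := le_antisymm hle hmge
      obtain ⟨ρ, hρ0, hρ1, hbarP, hbarN⟩ := barrier m hm
      have hθcτ : ContinuousAt (θ m) τ := by
        have hfun : θ m = fun u => z m u / ψ m u := funext (hθ m hm)
        rw [hfun]
        exact hzcτ.div ((hψcont m hm).continuousAt) (hψpos m hm τ).ne'
      rcases (abs_eq (hψpos m hm τ).le).1 heqz with hcase | hcase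
      · -- z m τ = ψ m τ
        have hθτ : θ m τ = 1 := by
          rw [hθ m hm τ, hcase, div_self (hψpos m hm τ).ne']
        have hevθ : ∀ᶠ s in nhds τ, ρ < θ m s := by
          have h5 := hθcτ.tendsto
          rw [hθτ] at h5
          exact h5.eventually_const_lt hρ1
        rcases Metric.eventually_nhds_iff.1 hevθ with ⟨ε, hε, hball⟩
        set σ := max (τ - ε/2) 0 with hσdef
        have hσ0 : 0 ≤ σ := le_max_right _ _
        have hστ : σ < τ := by
          rw [hσdef, max_lt_iff]
          constructor <;> linarith
        have hballσ : ∀ x, σ ≤ x → x ≤ τ → ρ < θ m x := by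
          intro x hx1 hx2
          refine hball ?_
          rw [Real.dist_eq, abs_lt]
          have hσl : τ - ε/2 ≤ σ := le_max_left _ _
          constructor <;> linarith
        have hanti : StrictAntiOn (fun t => z m t - ψ m t) (Icc σ τ) := by
          apply strictAntiOn_of_deriv_neg (convex_Icc σ τ)
          · intro x hx
            rcases eq_or_lt_of_le hx.2 with he | hxτ
            · rw [he]
              exact (hzcτ.sub ((hψcont m hm).continuousAt)).continuousWithinAt
            · have hx0 : 0 ≤ x := le_trans hσ0 hx.1
              obtain ⟨D, hD, _⟩ := hbarP x hx0 (hPlt x hx0 hxτ) (hballσ x hx.1 hx.2)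
              exact hD.continuousAt.continuousWithinAt
          · intro x hx
            rw [interior_Icc] at hx
            have hx0 : 0 ≤ x := le_trans hσ0 hx.1.le
            obtain ⟨D, hD, hDneg⟩ := hbarP x hx0 (hPlt x hx0 hx.2) (hballσ x hx.1.le hx.2.le)
            rw [hD.deriv]
            exact hDneg
        have h1 := hanti (show σ ∈ Icc σ τ from ⟨le_refl _, hστ.le⟩)
          (show τ ∈ Icc σ τ from ⟨hστ.le, le_refl _⟩) hστ
        have hPσ := hPlt σ hσ0 hστ m hm
        have h2 := (abs_lt.1 hPσ).2
        simp only [hcase] at h1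
        linarith
      · -- z m τ = -ψ m τ
        have hθτ : θ m τ = -1 := by
          rw [hθ m hm τ, hcase, neg_div, div_self (hψpos m hm τ).ne']
        have hevθ : ∀ᶠ s in nhds τ, θ m s < -ρ := by
          have h5 := hθcτ.tendsto
          rw [hθτ] at h5
          exact h5.eventually_lt_const (by linarith)
        rcases Metric.eventually_nhds_iff.1 hevθ with ⟨ε, hε, hball⟩
        set σ := max (τ - ε/2) 0 with hσdef
        have hσ0 : 0 ≤ σ := le_max_right _ _
        have hστ : σ < τ := by
          rw [hσdef, max_lt_iff]
          constructor <;> linarith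
        have hballσ : ∀ x, σ ≤ x → x ≤ τ → θ m x < -ρ := by
          intro x hx1 hx2
          refine hball ?_
          rw [Real.dist_eq, abs_lt]
          have hσl : τ - ε/2 ≤ σ := le_max_left _ _
          constructor <;> linarith
        have hmono : StrictMonoOn (fun t => z m t + ψ m t) (Icc σ τ) := by
          apply strictMonoOn_of_deriv_pos (convex_Icc σ τ)
          · intro x hx
            rcases eq_or_lt_of_le hx.2 with he | hxτ
            · rw [he]
              exact (hzcτ.add ((hψcont m hm).continuousAt)).continuousWithinAt
            · have hx0 : 0 ≤ x := le_trans hσ0 hx.1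
              obtain ⟨D, hD, _⟩ := hbarN x hx0 (hPlt x hx0 hxτ) (hballσ x hx.1 hx.2)
              exact hD.continuousAt.continuousWithinAt
          · intro x hx
            rw [interior_Icc] at hx
            have hx0 : 0 ≤ x := le_trans hσ0 hx.1.le
            obtain ⟨D, hD, hDpos⟩ := hbarN x hx0 (hPlt x hx0 hx.2) (hballσ x hx.1.le hx.2.le)
            rw [hD.deriv]
            exact hDpos
        have h1 := hmono (show σ ∈ Icc σ τ from ⟨le_refl _, hστ.le⟩)
          (show τ ∈ Icc σ τ from ⟨hστ.le, le_refl _⟩) hστ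
        have hPσ := hPlt σ hσ0 hστ m hm
        have h2 := (abs_lt.1 hPσ).1
        simp only [hcase] at h1
        linarith
  -- conclusions
  refine ⟨inv, fun t ht => inv t ht 1 (Finset.mem_Icc.2 ⟨le_refl 1, hn⟩),
    fun t _ => hυbd n hnn t, ?_⟩
  intro i hi
  refine ⟨p i + vbar (i - 1) + vbar i + 1, ?_⟩
  intro t ht
  have hP := inv t ht
  obtain ⟨hi1, hi2⟩ := Finset.mem_Icc.1 hi
  have hvprev : 0 ≤ vbar (i - 1) := by
    rcases eq_or_lt_of_le hi1 with h | h
    · rw [show i - 1 = 0 by omega]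
      exact hvbar0.le
    · exact (hvbar (i-1) (Finset.mem_Icc.2 ⟨by omega, by omega⟩)).le
  have hξb := hξbd t ht hP i hi
  have hzb : |z i t| ≤ p i := (hP i hi).le.trans (hψlep i hi t ht)
  have hθb : |θ i t| ≤ 1 := (hθlt1 i hi t (hP i hi)).le
  have hυb : |υ i t| ≤ vbar i := (hυbd i hi t).le
  have hp0 := (hppos i hi).le
  have hv0 := (hvbar i hi).le
  have hq0 := (hq i hi).le
  have hqp := hpq i hi
  refine ⟨by linarith, by linarith, ?_, by linarith⟩
  have hp1 : (1:ℝ) ≤ p i + vbar (i - 1) + vbar i + 1 := by linarith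
  linarith
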